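/- Let $a, b, k, n$ be positive integers with $k = a + b \ge 2$ and $n \ge \max\{a, b\}$. Then $(1 + a/n)^b (1 - b/n)^a \ge 1 - \max\{a b^2, b a^2\}/n^2$. -/
import Mathlib

open Real

set_option maxHeartbeats 1000000

theorem ab_inequality (a b k n : ℕ) (ha : 1 ≤ a) (hb : 1 ≤ b) (hn : 1 ≤ n)
    (hk : k = a + b) (hk2 : 2 ≤ k) (hna : a ≤ n) (hnb : b ≤ n) :
    1 - (max (a * b ^ 2) (b * a ^ 2) : ℝ) / (n : ℝ) ^ 2 ≤
      (1 + (a : ℝ) / n) ^ b * (1 - (b : ℝ) / n) ^ a := by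
  have hn0 : (0:ℝ) < n := by exact_mod_cast hn
  have ha0 : (0:ℝ) < a := by exact_mod_cast ha
  have hb0 : (0:ℝ) < b := by exact_mod_cast hb
  have hna' : (a:ℝ) ≤ n := by exact_mod_cast hna
  have hnb' : (b:ℝ) ≤ n := by exact_mod_cast hnb
  set x : ℝ := (a:ℝ) / n with hxdef
  set y : ℝ := (b:ℝ) / n with hydef
  have hx0 : 0 < x := by positivity
  have hy0 : 0 < y := by positivity
  have hx1 : x ≤ 1 := by rw [hxdef, div_le_one hn0]; exact hna'
  have hy1 : y ≤ 1 := by rw [hydef, div_le_one hn0]; exact hnb'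
  rcases le_total a b with h | h
  · -- max is a * b^2; show P ≥ (1-y^2)^a ≥ 1 - a y^2
    have hab : (a:ℝ) ≤ b := by exact_mod_cast h
    -- key: (1+y)^a ≤ (1+x)^b
    have hfrac0 : (0:ℝ) ≤ (a:ℝ)/b := by positivity
    have hfrac1 : (a:ℝ)/b ≤ 1 := by rw [div_le_one hb0]; exact hab
    have hbern : (1 + y) ^ ((a:ℝ)/b) ≤ 1 + x := by
      have := rpow_one_add_le_one_add_mul_self (by linarith : (-1:ℝ) ≤ y) hfrac0 hfrac1
      have hxy : (a:ℝ)/b * y = x := by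
        rw [hydef, hxdef]; field_simp
      linarith [this, hxy ▸ this]
    have hkey : (1 + y) ^ a ≤ (1 + x) ^ b := by
      have h1 : ((1 + y) ^ ((a:ℝ)/b)) ^ b ≤ (1 + x) ^ b :=
        pow_le_pow_left₀ (rpow_nonneg (by linarith) _) hbern b
      have h2 : ((1 + y) ^ ((a:ℝ)/b)) ^ b = (1 + y) ^ a := by
        rw [← rpow_natCast ((1 + y) ^ ((a:ℝ)/b)) b, ← rpow_mul (by linarith),
          div_mul_cancel₀ _ (ne_of_gt hb0), rpow_natCast]
      rw [h2] at h1; exact h1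
    have hchain : (1 + y) ^ a * (1 - y) ^ a ≤ (1 + x) ^ b * (1 - y) ^ a :=
      mul_le_mul_of_nonneg_right hkey (pow_nonneg (by linarith) a)
    have hbern2 : 1 - (a:ℝ) * y ^ 2 ≤ (1 + y) ^ a * (1 - y) ^ a := by
      have := one_add_mul_le_pow (by nlinarith : (-2:ℝ) ≤ -(y^2)) a
      calc 1 - (a:ℝ) * y ^ 2 = 1 + a * (-(y^2)) := by ring
        _ ≤ (1 + -(y^2)) ^ a := this
        _ = ((1+y)*(1-y)) ^ a := by ring_nf
        _ = (1 + y) ^ a * (1 - y) ^ a := mul_pow _ _ _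
    have heq : (max ((a:ℝ) * (b:ℝ) ^ 2) ((b:ℝ) * (a:ℝ) ^ 2)) / (n:ℝ) ^ 2 = a * y ^ 2 := by
      rw [max_eq_left (by nlinarith [mul_le_mul_of_nonneg_left hab (by positivity : (0:ℝ) ≤ (a:ℝ)*(b:ℝ))] : (b:ℝ) * (a:ℝ) ^ 2 ≤ (a:ℝ) * (b:ℝ) ^ 2), hydef]
      field_simp
      try ring
    rw [heq]
    exact le_trans hbern2 hchain
  · -- max is b * a^2; show P ≥ (1-x^2)^b ≥ 1 - b x^2
    have hab : (b:ℝ) ≤ a := by exact_mod_cast h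
    have hfrac0 : (0:ℝ) ≤ (b:ℝ)/a := by positivity
    have hfrac1 : (b:ℝ)/a ≤ 1 := by rw [div_le_one ha0]; exact hab
    have hbern : (1 - x) ^ ((b:ℝ)/a) ≤ 1 - y := by
      have h0 := rpow_one_add_le_one_add_mul_self (by linarith : (-1:ℝ) ≤ -x) hfrac0 hfrac1
      have hxy : (b:ℝ)/a * x = y := by
        rw [hydef, hxdef]; field_simp
      have : (1 + -x) ^ ((b:ℝ)/a) ≤ 1 + (b:ℝ)/a * (-x) := h0
      rw [show (1:ℝ) + -x = 1 - x by ring] at this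
      nlinarith [this, hxy]
    have hkey : (1 - x) ^ b ≤ (1 - y) ^ a := by
      have h1 : ((1 - x) ^ ((b:ℝ)/a)) ^ a ≤ (1 - y) ^ a :=
        pow_le_pow_left₀ (rpow_nonneg (by linarith) _) hbern a
      have h2 : ((1 - x) ^ ((b:ℝ)/a)) ^ a = (1 - x) ^ b := by
        rw [← rpow_natCast ((1 - x) ^ ((b:ℝ)/a)) a, ← rpow_mul (by linarith),
          div_mul_cancel₀ _ (ne_of_gt ha0), rpow_natCast]
      rw [h2] at h1; exact h1
    have hchain : (1 + x) ^ b * (1 - x) ^ b ≤ (1 + x) ^ b * (1 - y) ^ a :=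
      mul_le_mul_of_nonneg_left hkey (pow_nonneg (by linarith) b)
    have hbern2 : 1 - (b:ℝ) * x ^ 2 ≤ (1 + x) ^ b * (1 - x) ^ b := by
      have := one_add_mul_le_pow (by nlinarith : (-2:ℝ) ≤ -(x^2)) b
      calc 1 - (b:ℝ) * x ^ 2 = 1 + b * (-(x^2)) := by ring
        _ ≤ (1 + -(x^2)) ^ b := this
        _ = ((1+x)*(1-x)) ^ b := by ring_nf
        _ = (1 + x) ^ b * (1 - x) ^ b := mul_pow _ _ _
    have heq : (max ((a:ℝ) * (b:ℝ) ^ 2) ((b:ℝ) * (a:ℝ) ^ 2)) / (n:ℝ) ^ 2 = b * x ^ 2 := by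
      rw [max_eq_right (by nlinarith [mul_le_mul_of_nonneg_left hab (by positivity : (0:ℝ) ≤ (a:ℝ)*(b:ℝ))] : (a:ℝ) * (b:ℝ) ^ 2 ≤ (b:ℝ) * (a:ℝ) ^ 2), hxdef]
      field_simp
      try ring
    rw [heq]
    exact le_trans hbern2 hchain
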